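/- arXiv:1803.09008 — 2 statements merged into one kernel-verified Lean document; each statement's English description precedes it below -/
import Mathlib

section
/- Let n ≥ 1, let H be a subgroup of (ℤ/nℤ)*, and let G = (ℤ/nℤ) ⋊ H be the semidirect product in which u ∈ H acts on the additive group ℤ/nℤ by multiplication x ↦ u·x. Suppose H contains an element of order q, where q = p^e is a prime power (p prime, e ≥ 1). If there exists an injective group homomorphism from G into GL_d(ℂ), then d ≥ q. -/
/-- The action of the unit group `(ℤ/nℤ)ˣ` on the additive group `ℤ/nℤ`
(written multiplicatively) by multiplication `x ↦ u·x`. -/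
def unitsAut (n : ℕ) : (ZMod n)ˣ →* MulAut (Multiplicative (ZMod n)) where
  toFun u :=
    { toFun := fun x => Multiplicative.ofAdd ((u : ZMod n) * x.toAdd)
      invFun := fun x => Multiplicative.ofAdd (((u⁻¹ : (ZMod n)ˣ) : ZMod n) * x.toAdd)
      left_inv := fun x => by simp [← mul_assoc]
      right_inv := fun x => by simp [← mul_assoc]
      map_mul' := fun x y => by simp [mul_add] }
  map_one' := by ext x; simp
  map_mul' u v := by ext x; simp [mul_assoc]

section Aux

open Polynomial


-- L1: number theory
lemma auxNT (n : ℕ) (hn : n ≠ 0) (p e : ℕ) (hp : p.Prime) (he : 1 ≤ e)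
    (u : (ZMod n)ˣ) (hu : orderOf u = p ^ e) :
    ∃ (ℓ m : ℕ) (h : ℓ ^ m ∣ n), ℓ.Prime ∧ 1 ≤ m ∧
      orderOf (ZMod.unitsMap h u) = p ^ e := by
  haveI : NeZero n := ⟨hn⟩
  have hc : u ^ (p ^ (e - 1)) ≠ 1 := by
    intro h1
    have := orderOf_dvd_iff_pow_eq_one.mpr h1
    rw [hu, Nat.pow_dvd_pow_iff_le_right hp.one_lt] at this
    omega
  set c := u ^ (p ^ (e - 1)) with hcdef
  have hcne : ((c : ZMod n)) ≠ 1 := fun h => hc (Units.ext h)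
  set w : ZMod n := (c : ZMod n) - 1 with hwdef
  have hw : w ≠ 0 := sub_ne_zero.mpr hcne
  set k := w.val with hkdef
  have hkcast : (k : ZMod n) = w := ZMod.natCast_zmod_val w
  have hk : k ≠ 0 := by
    rw [hkdef, Ne, ZMod.val_eq_zero]; exact hw
  have hnk : ¬ n ∣ k := by
    intro hdvd
    exact absurd (Nat.le_of_dvd (Nat.pos_of_ne_zero hk) hdvd) (not_le.mpr (ZMod.val_lt w))
  have hfac : ¬ (n.factorization ≤ k.factorization) :=
    fun h => hnk ((Nat.factorization_le_iff_dvd hn hk).mp h)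
  rw [Finsupp.le_def] at hfac
  push_neg at hfac
  obtain ⟨ℓ, hℓlt⟩ := hfac
  set m := n.factorization ℓ with hmdef
  have hm1 : 1 ≤ m := by omega
  have hℓp : ℓ.Prime := by
    have : ℓ ∈ n.factorization.support := by
      rw [Finsupp.mem_support_iff]; omega
    rw [Nat.support_factorization] at this
    exact Nat.prime_of_mem_primeFactors this
  have hdvd : ℓ ^ m ∣ n := Nat.ordProj_dvd n ℓ
  have hnotdvd : ¬ ℓ ^ m ∣ k := by
    rw [hℓp.pow_dvd_iff_le_factorization hk]; omega
  refine ⟨ℓ, m, hdvd, hℓp, hm1, ?_⟩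
  set ur := ZMod.unitsMap hdvd u with hurdef
  have h1 : orderOf ur ∣ p ^ e := hu ▸ orderOf_map_dvd (ZMod.unitsMap hdvd) u
  have h2 : ur ^ (p ^ (e - 1)) ≠ 1 := by
    intro hone
    have : ((ZMod.unitsMap hdvd c : ZMod (ℓ ^ m))) = 1 := by
      rw [hcdef, map_pow, hone, Units.val_one]
    have hcast : (ZMod.castHom hdvd (ZMod (ℓ ^ m))) ((c : ZMod n)) = 1 := this
    have : (ZMod.castHom hdvd (ZMod (ℓ ^ m))) w = 0 := by
      rw [hwdef, map_sub, hcast, map_one, sub_self]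
    rw [← hkcast, map_natCast] at this
    rw [ZMod.natCast_eq_zero_iff] at this
    exact hnotdvd this
  obtain ⟨i, hie, hi⟩ := (Nat.dvd_prime_pow hp).mp h1
  have : i = e := by
    by_contra hne
    have : orderOf ur ∣ p ^ (e - 1) := hi ▸ pow_dvd_pow p (by omega)
    exact h2 (orderOf_dvd_iff_pow_eq_one.mp this)
  rw [hi, this]



lemma auxDvd (P g : Polynomial ℂ) (hm : P.Monic) (hsep : P.Separable)
    (h : ∀ x : ℂ, P.IsRoot x → g.IsRoot x) : P ∣ g := by
  have hsplit : P.Splits := IsAlgClosed.splits P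
  have hprod := hsplit.eq_prod_roots_of_monic hm
  have hnodup : P.roots.Nodup := Polynomial.nodup_roots hsep
  have hfin : P = ∏ x ∈ P.roots.toFinset, (X - C x) := by
    conv_lhs => rw [hprod]
    rw [Finset.prod_eq_multiset_prod, Multiset.toFinset_val,
      Multiset.dedup_eq_self.mpr hnodup]
  rw [hfin]
  apply Finset.prod_dvd_of_coprime
  · intro a _ b _ hab
    exact (Polynomial.pairwise_coprime_X_sub_C Function.injective_id) hab
  · intro x hx
    rw [Multiset.mem_toFinset, mem_roots (hm.ne_zero)] at hx
    rw [dvd_iff_isRoot]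
    exact h x hx

lemma auxSpec {d : ℕ} (N : Matrix (Fin d) (Fin d) ℂ) (x : ℂ) :
    x ∈ spectrum ℂ N ↔ (minpoly ℂ N).IsRoot x := by
  let E := (Matrix.toLinAlgEquiv (Pi.basisFun ℂ (Fin d))) N
  rw [← AlgEquiv.spectrum_eq (Matrix.toLinAlgEquiv (Pi.basisFun ℂ (Fin d))) N]
  rw [← Module.End.hasEigenvalue_iff_mem_spectrum,
    Module.End.hasEigenvalue_iff_isRoot,
    minpoly.algEquiv_eq]

lemma auxEig {d : ℕ} (ℓ m : ℕ) (hl : ℓ.Prime) (hm : 1 ≤ m)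
    (N : Matrix (Fin d) (Fin d) ℂ) (hord : orderOf N = ℓ ^ m) :
    ∃ x : ℂ, x ∈ spectrum ℂ N ∧ orderOf x = ℓ ^ m := by
  have hNpow : N ^ (ℓ ^ m) = 1 := hord ▸ pow_orderOf_eq_one N
  have hNpow' : N ^ (ℓ ^ (m - 1)) ≠ 1 := by
    intro h1
    have := orderOf_dvd_iff_pow_eq_one.mpr h1
    rw [hord, Nat.pow_dvd_pow_iff_le_right hl.one_lt] at this
    omega
  set P : Polynomial ℂ := Polynomial.X ^ (ℓ ^ m) - 1 with hPdef
  set g : Polynomial ℂ := Polynomial.X ^ (ℓ ^ (m - 1)) - 1 with hgdef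
  have hPm : (minpoly ℂ N) ∣ P := by
    apply minpoly.dvd
    rw [hPdef]
    simp [hNpow]
  have hPsep : P.Separable := by
    rw [hPdef, show (1 : Polynomial ℂ) = Polynomial.C 1 by simp]
    exact Polynomial.separable_X_pow_sub_C 1
      (Nat.cast_ne_zero.mpr (pow_ne_zero m hl.ne_zero)) one_ne_zero
  have hmono : (minpoly ℂ N).Monic := minpoly.monic (IsIntegral.of_finite ℂ N)
  have hsep : (minpoly ℂ N).Separable := Polynomial.Separable.of_dvd hPsep hPm
  have hng : ¬ (minpoly ℂ N) ∣ g := by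
    intro hdvd
    have : (Polynomial.aeval N) g = 0 := by
      obtain ⟨t, ht⟩ := hdvd
      rw [ht, map_mul, minpoly.aeval, zero_mul]
    rw [hgdef] at this
    simp only [map_sub, map_pow, Polynomial.aeval_X, map_one, sub_eq_zero] at this
    exact hNpow' this
  have : ¬ ∀ x : ℂ, (minpoly ℂ N).IsRoot x → g.IsRoot x := by
    intro hall
    exact hng (auxDvd _ g hmono hsep hall)
  push_neg at this
  obtain ⟨x, hx1, hx2⟩ := this
  refine ⟨x, (auxSpec N x).mpr hx1, ?_⟩
  have hxP : x ^ (ℓ ^ m) = 1 := by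
    have := hx1.dvd hPm
    rw [hPdef, Polynomial.IsRoot, Polynomial.eval_sub, Polynomial.eval_pow,
      Polynomial.eval_X, Polynomial.eval_one, sub_eq_zero] at this
    exact this
  have hxg : x ^ (ℓ ^ (m - 1)) ≠ 1 := by
    intro h1
    apply hx2
    rw [hgdef, Polynomial.IsRoot, Polynomial.eval_sub, Polynomial.eval_pow,
      Polynomial.eval_X, Polynomial.eval_one, sub_eq_zero]
    exact h1
  have h1 : orderOf x ∣ ℓ ^ m := orderOf_dvd_iff_pow_eq_one.mpr hxP
  obtain ⟨i, hie, hi⟩ := (Nat.dvd_prime_pow hl).mp h1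
  have : i = m := by
    by_contra hne
    have : orderOf x ∣ ℓ ^ (m - 1) := hi ▸ pow_dvd_pow ℓ (by omega)
    exact hxg (orderOf_dvd_iff_pow_eq_one.mp this)
  rw [hi, this]

lemma auxCard {d : ℕ} (N : Matrix (Fin d) (Fin d) ℂ) (q : ℕ) (ψ : Fin q → ℂ)
    (hinj : Function.Injective ψ) (hmem : ∀ j, ψ j ∈ spectrum ℂ N) : q ≤ d := by
  have hint : IsIntegral ℂ N := IsIntegral.of_finite ℂ N
  have hne : minpoly ℂ N ≠ 0 := minpoly.ne_zero hint
  have hsub : Finset.image ψ Finset.univ ⊆ (minpoly ℂ N).roots.toFinset := by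
    intro x hx
    obtain ⟨j, _, rfl⟩ := Finset.mem_image.mp hx
    rw [Multiset.mem_toFinset, Polynomial.mem_roots hne]
    exact (auxSpec N (ψ j)).mp (hmem j)
  calc q = (Finset.image ψ Finset.univ).card := by
          rw [Finset.card_image_of_injective _ hinj, Finset.card_univ, Fintype.card_fin]
    _ ≤ (minpoly ℂ N).roots.toFinset.card := Finset.card_le_card hsub
    _ ≤ Multiset.card (minpoly ℂ N).roots := Multiset.toFinset_card_le _
    _ ≤ (minpoly ℂ N).natDegree := Polynomial.card_roots' _
    _ ≤ (Matrix.charpoly N).natDegree :=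
        Polynomial.natDegree_le_natDegree
          (minpoly.degree_le_of_ne_zero ℂ N (Matrix.charpoly_monic N).ne_zero
            (Matrix.aeval_self_charpoly N))
    _ = d := by rw [Matrix.charpoly_natDegree_eq_dim, Fintype.card_fin]


end Aux

/-- Let `H ≤ (ℤ/nℤ)ˣ` and `G = (ℤ/nℤ) ⋊ H`. If `H` contains an
element of prime power order `q = pᵉ` and `G` embeds into `GL_d(ℂ)`, then `d ≥ q`. -/
theorem stmt5 (n : ℕ) (hn : 1 ≤ n) (H : Subgroup (ZMod n)ˣ)
    (p e : ℕ) (hp : p.Prime) (he : 1 ≤ e) (q : ℕ) (hq : q = p ^ e)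
    (hord : ∃ h : H, orderOf h = q)
    (d : ℕ) (hd : 0 < d)
    (f : (Multiplicative (ZMod n)) ⋊[(unitsAut n).comp H.subtype] H →*
      Matrix.GeneralLinearGroup (Fin d) ℂ)
    (hf : Function.Injective f) :
    q ≤ d := by
  subst hq
  have hn0 : n ≠ 0 := by omega
  haveI : NeZero n := ⟨hn0⟩
  obtain ⟨h, hh⟩ := hord
  set u : (ZMod n)ˣ := H.subtype h with hudef
  have hu : orderOf u = p ^ e := by
    rw [hudef, orderOf_injective H.subtype (Subgroup.subtype_injective H) h, hh]
  obtain ⟨ℓ, m, hdvd, hℓ, hm, hur⟩ := auxNT n hn0 p e hp he u hu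
  set r : ℕ := ℓ ^ m with hrdef
  -- the element of additive order r
  set x : ZMod n := ((n / r : ℕ) : ZMod n) with hxdef
  have hxord : addOrderOf x = r := by
    rw [hxdef, ZMod.addOrderOf_coe _ hn0,
      Nat.gcd_eq_right (Nat.div_dvd_of_dvd hdvd), Nat.div_div_self hdvd hn0]
  set g0 : (Multiplicative (ZMod n)) ⋊[(unitsAut n).comp H.subtype] H :=
    SemidirectProduct.inl (Multiplicative.ofAdd x) with hg0def
  have hg0ord : orderOf g0 = r := by
    rw [hg0def, orderOf_injective SemidirectProduct.inl SemidirectProduct.inl_injective,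
      orderOf_ofAdd_eq_addOrderOf, hxord]
  set M : Matrix.GeneralLinearGroup (Fin d) ℂ := f g0 with hMdef
  set Mmat : Matrix (Fin d) (Fin d) ℂ := (M : Matrix (Fin d) (Fin d) ℂ) with hMmatdef
  have hMord : orderOf Mmat = r := by
    rw [hMmatdef]
    rw [orderOf_units]
    rw [hMdef, orderOf_injective f hf g0, hg0ord]
  obtain ⟨lam, hlamspec, hlamord⟩ := auxEig ℓ m hℓ hm Mmat hMord
  set u' : ℕ := (u : ZMod n).val with hu'def
  -- conjugation relation
  have hrel : g0 ^ u' = SemidirectProduct.inr h * g0 * SemidirectProduct.inr h⁻¹ := by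
    rw [hg0def, ← map_pow]
    rw [← SemidirectProduct.inl_aut]
    congr 1
    show Multiplicative.ofAdd x ^ u' = Multiplicative.ofAdd ((u : ZMod n) * x)
    rw [← ofAdd_nsmul, nsmul_eq_mul, hu'def, ZMod.natCast_zmod_val]
  have hspec : spectrum ℂ (Mmat ^ u') = spectrum ℂ Mmat := by
    have : Mmat ^ u' = (f (SemidirectProduct.inr h) : Matrix (Fin d) (Fin d) ℂ) * Mmat *
        ((f (SemidirectProduct.inr h))⁻¹ : Matrix.GeneralLinearGroup (Fin d) ℂ) := by
      rw [hMmatdef, ← Units.val_pow_eq_pow_val, hMdef, ← map_pow, hrel]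
      rw [map_mul, map_mul, map_inv]
      simp
    rw [this]
    exact spectrum.units_conjugate
  have key : ∀ j : ℕ, lam ^ (u' ^ j) ∈ spectrum ℂ Mmat := by
    intro j
    induction j with
    | zero => simpa using hlamspec
    | succ j ih =>
      have : lam ^ (u' ^ (j + 1)) = (lam ^ (u' ^ j)) ^ u' := by
        rw [← pow_mul, pow_succ]
      rw [this, ← hspec]
      exact spectrum.pow_image_subset Mmat u' ⟨_, ih, rfl⟩
  -- the q distinct eigenvalues
  set ψ : Fin (p ^ e) → ℂ := fun j => lam ^ (u' ^ (j : ℕ)) with hψdef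
  have hlamne : lam ≠ 0 := by
    intro h0
    have h1 : lam ^ (ℓ ^ m) = 1 := hlamord ▸ pow_orderOf_eq_one lam
    rw [h0, zero_pow (pow_ne_zero m hℓ.ne_zero)] at h1
    exact zero_ne_one h1
  set lamu : ℂˣ := Units.mk0 lam hlamne with hlamudef
  have hlamuord : orderOf lamu = ℓ ^ m := by
    rw [← hlamord, ← orderOf_units, hlamudef, Units.val_mk0]
  have hinj : Function.Injective ψ := by
    intro i j hij
    rw [hψdef] at hij
    simp only at hij
    have hij' : lamu ^ (u' ^ (i : ℕ)) = lamu ^ (u' ^ (j : ℕ)) := by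
      apply Units.ext
      simpa [hlamudef] using hij
    rw [pow_eq_pow_iff_modEq, hlamuord] at hij'
    replace hij := hij'
    have hcast : ((u' ^ (i : ℕ) : ℕ) : ZMod r) = ((u' ^ (j : ℕ) : ℕ) : ZMod r) :=
      (ZMod.natCast_eq_natCast_iff _ _ _).mpr hij
    push_cast at hcast
    have hu'r : ((u' : ZMod r)) = ((ZMod.unitsMap hdvd u : (ZMod r)ˣ) : ZMod r) := by
      rw [hu'def, ZMod.natCast_val]
      rfl
    rw [hu'r] at hcast
    have hunits : (ZMod.unitsMap hdvd u) ^ (i : ℕ) = (ZMod.unitsMap hdvd u) ^ (j : ℕ) := by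
      apply Units.ext
      simpa using hcast
    rw [pow_eq_pow_iff_modEq, hur] at hunits
    have hmod : (i : ℕ) % p ^ e = (j : ℕ) % p ^ e := hunits
    rw [Nat.mod_eq_of_lt i.isLt, Nat.mod_eq_of_lt j.isLt] at hmod
    exact Fin.ext hmod
  exact auxCard Mmat (p ^ e) ψ hinj (fun j => key j)
end

section
/- For each integer n ≥ 1, let H_n be a subgroup of (ℤ/nℤ)* and let G_n = (ℤ/nℤ) ⋊ H_n be the semidirect product in which u ∈ H_n acts on the additive group ℤ/nℤ by multiplication x ↦ u·x. If |H_n| → ∞ as n → ∞, then for every positive integer d, the set of integers n ≥ 1 such that G_n admits an injective group homomorphism into GL_d(ℂ) is finite. Equivalently, the minimal dimension of a faithful complex representation of G_n tends to infinity as n → ∞. -/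
open Polynomial

private lemma pow_mod_aux {n : ℕ} (l : ℂ) (hl : l ^ n = 1) (a : ℕ) : l ^ a = l ^ (a % n) := by
  conv_lhs => rw [← Nat.div_add_mod a n]
  rw [pow_add, pow_mul, hl, one_pow, one_mul]

/-- Conjugation by a unit as an algebra automorphism-ish AlgHom. -/
noncomputable def conjAlgHom {d : ℕ} (v : (Matrix (Fin d) (Fin d) ℂ)ˣ) :
    Matrix (Fin d) (Fin d) ℂ →ₐ[ℂ] Matrix (Fin d) (Fin d) ℂ where
  toFun A := (v : Matrix (Fin d) (Fin d) ℂ) * A *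
    ((v⁻¹ : (Matrix (Fin d) (Fin d) ℂ)ˣ) : Matrix (Fin d) (Fin d) ℂ)
  map_one' := by simp only [mul_one, Units.mul_inv]
  map_mul' A B := by
    simp only [mul_assoc, Units.inv_mul_cancel_left]
  map_zero' := by simp
  map_add' A B := by simp [mul_add, add_mul]
  commutes' c := by
    simp only [Algebra.algebraMap_eq_smul_one, mul_smul_comm, smul_mul_assoc, mul_one,
      one_mul, Units.mul_inv]

lemma key_bound {n d : ℕ} (hn : 1 ≤ n) (H : Subgroup (ZMod n)ˣ)
    (f : (Multiplicative (ZMod n)) ⋊[(unitsAut n).comp H.subtype] H →*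
      Matrix.GeneralLinearGroup (Fin d) ℂ) (hf : Function.Injective f) :
    Nat.card H ≤ Nat.factorial d := by
  classical
  haveI : NeZero n := ⟨by omega⟩
  let F : (Multiplicative (ZMod n)) ⋊[(unitsAut n).comp H.subtype] H →*
      Matrix (Fin d) (Fin d) ℂ := (Units.coeHom _).comp f
  have hF : Function.Injective F := fun a b h => hf (Units.ext h)
  set M : Matrix (Fin d) (Fin d) ℂ :=
    F (SemidirectProduct.inl (Multiplicative.ofAdd (1 : ZMod n))) with hM
  have hpow : ∀ m : ℕ,
      M ^ m = F (SemidirectProduct.inl (Multiplicative.ofAdd ((m : ZMod n)))) := by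
    intro m
    rw [hM, ← map_pow, ← map_pow]
    congr 2
    rw [← ofAdd_nsmul]
    congr 1
    simp [nsmul_eq_mul]
  have hInt : IsIntegral ℂ M := ⟨M.charpoly, M.charpoly_monic, M.aeval_self_charpoly⟩
  set p := minpoly ℂ M with hp
  have hp0 : p ≠ 0 := minpoly.ne_zero hInt
  have hmonic : p.Monic := minpoly.monic hInt
  have hMn : M ^ n = 1 := by
    rw [hpow n, ZMod.natCast_self]
    simpa using map_one F
  have hdvdXn : p ∣ X ^ n - 1 := minpoly.dvd ℂ M (by simp [hMn])
  have hsep : p.Separable := by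
    have h1 : ((X : ℂ[X]) ^ n - 1).Separable := by
      have hnn : (n : ℂ) ≠ 0 := Nat.cast_ne_zero.mpr (by omega)
      have := Polynomial.separable_X_pow_sub_C (1 : ℂ) hnn one_ne_zero
      simpa using this
    exact h1.of_dvd hdvdXn
  have hroots_unity : ∀ l : ℂ, p.IsRoot l → l ^ n = 1 := by
    intro l hl
    have h2 : (X ^ n - 1 : ℂ[X]).IsRoot l := hl.dvd hdvdXn
    have := h2
    simp only [IsRoot, eval_sub, eval_pow, eval_X, eval_one, sub_eq_zero] at this
    exact this
  -- conjugation identity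
  have hconj : ∀ u : H, ∃ v : (Matrix (Fin d) (Fin d) ℂ)ˣ,
      M ^ (((u : (ZMod n)ˣ) : ZMod n).val) = (v : Matrix (Fin d) (Fin d) ℂ) * M *
        ((v⁻¹ : (Matrix (Fin d) (Fin d) ℂ)ˣ) : Matrix (Fin d) (Fin d) ℂ) := by
    intro u
    refine ⟨f (SemidirectProduct.inr u), ?_⟩
    have h1 := SemidirectProduct.inl_aut (φ := (unitsAut n).comp H.subtype) u
      (Multiplicative.ofAdd (1 : ZMod n))
    have h2 : ((unitsAut n).comp H.subtype) u (Multiplicative.ofAdd (1 : ZMod n)) =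
        Multiplicative.ofAdd ((u : (ZMod n)ˣ) : ZMod n) := by
      show Multiplicative.ofAdd ((u : (ZMod n)ˣ) * (Multiplicative.ofAdd (1 : ZMod n)).toAdd)
        = _
      rw [toAdd_ofAdd, mul_one]
    rw [h2] at h1
    have h3 := congrArg F h1
    rw [map_mul, map_mul] at h3
    have h4 : F (SemidirectProduct.inr u⁻¹) =
        ((f (SemidirectProduct.inr u))⁻¹ : (Matrix (Fin d) (Fin d) ℂ)ˣ) := by
      have h5 : f (SemidirectProduct.inr u⁻¹) = (f (SemidirectProduct.inr u))⁻¹ := by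
        rw [← map_inv f, ← map_inv]
      exact congrArg Units.val h5
    rw [h4] at h3
    rw [hpow, ZMod.natCast_rightInverse ((u : (ZMod n)ˣ) : ZMod n)]
    exact h3
  -- closure of roots under the action
  have hclosed : ∀ (u : H) (l : ℂ), p.IsRoot l →
      p.IsRoot (l ^ ((u : (ZMod n)ˣ) : ZMod n).val) := by
    intro u l hl
    set k := ((u : (ZMod n)ˣ) : ZMod n).val with hk
    obtain ⟨v, hv⟩ := hconj u
    have hq : (Polynomial.aeval M) (p.comp (X ^ k)) = 0 := by
      rw [aeval_comp]
      simp only [map_pow, aeval_X]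
      rw [hk, hv]
      have h5 := Polynomial.aeval_algHom_apply (conjAlgHom v) M p
      rw [show ((v : Matrix (Fin d) (Fin d) ℂ) * M *
          ((v⁻¹ : (Matrix (Fin d) (Fin d) ℂ)ˣ) : Matrix (Fin d) (Fin d) ℂ)) =
          conjAlgHom v M from rfl, h5, minpoly.aeval]
      simp [conjAlgHom]
    have hpd : p ∣ p.comp (X ^ k) := minpoly.dvd ℂ M hq
    have := hl.dvd hpd
    simpa [IsRoot, eval_comp] using this
  -- the finite set of roots
  let S : Finset ℂ := p.roots.toFinset
  have hSmem : ∀ l : ℂ, l ∈ S ↔ p.IsRoot l := by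
    intro l
    rw [Multiset.mem_toFinset, mem_roots hp0]
  have hS1 : ∀ l : ℂ, l ∈ S → l ^ n = 1 := fun l hl => hroots_unity l ((hSmem l).mp hl)
  let k : H → ℕ := fun u => ((u : (ZMod n)ˣ) : ZMod n).val
  have hkmul : ∀ (u v : H) (l : ℂ), l ^ n = 1 → (l ^ k u) ^ k v = l ^ k (u * v) := by
    intro u v l hl
    have h1 : k (u * v) = (((u : (ZMod n)ˣ) : ZMod n) * ((v : (ZMod n)ˣ) : ZMod n)).val := by
      simp [k]
    rw [← pow_mul, h1, ZMod.val_mul, ← pow_mod_aux l hl]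
  have hk1 : ∀ l : ℂ, l ^ n = 1 → l ^ k 1 = l := by
    intro l hl
    have h1 : k 1 = 1 % n := by
      show ((((1 : H) : (ZMod n)ˣ) : ZMod n)).val = 1 % n
      rw [show (((1 : H) : (ZMod n)ˣ) : ZMod n) = ((1 : ℕ) : ZMod n) by simp,
        ZMod.val_natCast]
    rw [h1, ← pow_mod_aux l hl, pow_one]
  have hmemS_pow : ∀ (u : H) (l : ℂ), l ∈ S → l ^ k u ∈ S := fun u l hl =>
    (hSmem _).mpr (hclosed u l ((hSmem l).mp hl))
  let act : H → Equiv.Perm {x : ℂ // x ∈ S} := fun u =>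
    { toFun := fun x => ⟨x.1 ^ k u, hmemS_pow u x.1 x.2⟩
      invFun := fun x => ⟨x.1 ^ k u⁻¹, hmemS_pow u⁻¹ x.1 x.2⟩
      left_inv := fun x => Subtype.ext (by
        have hl := hS1 x.1 x.2
        show (x.1 ^ k u) ^ k u⁻¹ = x.1
        rw [hkmul u u⁻¹ x.1 hl, mul_inv_cancel, hk1 x.1 hl])
      right_inv := fun x => Subtype.ext (by
        have hl := hS1 x.1 x.2
        show (x.1 ^ k u⁻¹) ^ k u = x.1
        rw [hkmul u⁻¹ u x.1 hl, inv_mul_cancel, hk1 x.1 hl]) }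
  let Φ : H →* Equiv.Perm {x : ℂ // x ∈ S} :=
    { toFun := act
      map_one' := Equiv.ext fun x => Subtype.ext (hk1 x.1 (hS1 x.1 x.2))
      map_mul' := fun u v => Equiv.ext fun x => Subtype.ext (by
        have hl := hS1 x.1 x.2
        show x.1 ^ k (u * v) = (x.1 ^ k v) ^ k u
        rw [hkmul v u x.1 hl, mul_comm v u]) }
  have hΦinj : Function.Injective Φ := by
    rw [injective_iff_map_eq_one]
    intro u hu
    have hfix : ∀ l : ℂ, p.IsRoot l → l ^ k u = l := by
      intro l hl
      have hmem : l ∈ S := (hSmem l).mpr hl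
      have := congrArg (fun e : Equiv.Perm {x : ℂ // x ∈ S} =>
        ((e ⟨l, hmem⟩ : {x : ℂ // x ∈ S}) : ℂ)) hu
      simpa [Φ, act] using this
    have hMk : M ^ k u = M := by
      by_cases hkone : k u = 1
      · rw [hkone, pow_one]
      · have hq0 : (X ^ k u - X : ℂ[X]) ≠ 0 := by
          intro h
          have h2 : ((X ^ k u - X : ℂ[X])).eval 2 = 0 := by rw [h]; simp
          simp only [eval_sub, eval_pow, eval_X] at h2
          have h3 : ((2 : ℂ)) ^ k u = 2 := by linear_combination h2
          have h4 : ((2 ^ k u : ℕ) : ℂ) = ((2 : ℕ) : ℂ) := by push_cast; exact h3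
          have h5 : (2 : ℕ) ^ k u = 2 ^ 1 := by simpa using Nat.cast_injective h4
          exact hkone (Nat.pow_right_injective (le_refl 2) h5)
        have hpdvd : p ∣ X ^ k u - X := by
          have heq : p = (p.roots.map fun a => X - C a).prod :=
            (IsAlgClosed.splits p).eq_prod_roots_of_monic hmonic
          rw [heq, Multiset.prod_X_sub_C_dvd_iff_le_roots hq0]
          rw [Multiset.le_iff_subset (nodup_roots hsep)]
          intro l hl
          rw [mem_roots hq0]
          have hl' : p.IsRoot l := isRoot_of_mem_roots hl
          simp only [IsRoot, eval_sub, eval_pow, eval_X, sub_eq_zero]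
          exact hfix l hl'
        have haev : (Polynomial.aeval M) (X ^ k u - X : ℂ[X]) = 0 := by
          obtain ⟨r, hr⟩ := hpdvd
          rw [hr, map_mul, minpoly.aeval, zero_mul]
        have : M ^ k u - M = 0 := by simpa using haev
        linear_combination (norm := abel) this
    have h6 : F (SemidirectProduct.inl (Multiplicative.ofAdd (((k u : ℕ) : ZMod n)))) =
        F (SemidirectProduct.inl (Multiplicative.ofAdd (1 : ZMod n))) := by
      rw [← hpow (k u), hMk, hM]
    have h7 := hF h6
    have h8 : ((k u : ℕ) : ZMod n) = (1 : ZMod n) := by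
      have := SemidirectProduct.inl_injective h7
      exact Multiplicative.ofAdd.injective this
    have h9 : ((u : (ZMod n)ˣ) : ZMod n) = 1 := by
      rw [ZMod.natCast_rightInverse _] at h8
      exact h8
    have h10 : (u : (ZMod n)ˣ) = 1 := Units.ext (by simpa using h9)
    exact Subtype.ext h10
  have hScard : S.card ≤ d := by
    have h1 : S.card ≤ p.natDegree :=
      (Multiset.toFinset_card_le _).trans (card_roots' p)
    have h2 : p ∣ M.charpoly := minpoly.dvd ℂ M M.aeval_self_charpoly
    have h3 : p.natDegree ≤ M.charpoly.natDegree :=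
      natDegree_le_of_dvd h2 M.charpoly_monic.ne_zero
    have h4 : M.charpoly.natDegree = d := by
      rw [Matrix.charpoly_natDegree_eq_dim, Fintype.card_fin]
    omega
  calc Nat.card H ≤ Nat.card (Equiv.Perm {x : ℂ // x ∈ S}) :=
        Nat.card_le_card_of_injective Φ hΦinj
    _ = Nat.factorial S.card := by
        rw [Nat.card_eq_fintype_card, Fintype.card_perm, Fintype.card_coe]
    _ ≤ Nat.factorial d := Nat.factorial_le hScard

/-- For each `n` let `H n ≤ (ℤ/nℤ)ˣ` and `G_n = (ℤ/nℤ) ⋊ H_n`.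
If `|H n| → ∞` as `n → ∞` then for every `d > 0` only finitely many of the
groups `G_n` (with `n ≥ 1`) embed into `GL_d(ℂ)`; i.e. the representation
dimension of `G_n` tends to infinity. -/
theorem stmt6 (H : ∀ n : ℕ, Subgroup (ZMod n)ˣ)
    (hH : Filter.Tendsto (fun n => Nat.card (H n)) Filter.atTop Filter.atTop)
    (d : ℕ) (hd : 0 < d) :
    {n : ℕ | 1 ≤ n ∧ ∃ f : (Multiplicative (ZMod n)) ⋊[(unitsAut n).comp (H n).subtype] (H n) →*
        Matrix.GeneralLinearGroup (Fin d) ℂ, Function.Injective f}.Finite := by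
  have hfin : {n : ℕ | Nat.card (H n) ≤ Nat.factorial d}.Finite := by
    have h := hH.eventually_gt_atTop (Nat.factorial d)
    rw [← Nat.cofinite_eq_atTop] at h
    have := Filter.eventually_cofinite.mp h
    simpa [not_lt] using this
  apply hfin.subset
  rintro n ⟨hn, f, hf⟩
  exact key_bound hn (H n) f hf
end
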